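/- Define F(α) = α·B(W) - B(αW) where B(W) = (XW + X + YZ + Z - √((XW + X - YZ + Z)² + 4YZ²))/(2YZ). Then F is strictly convex in α on (0,∞): its second derivative ∂²F/∂α² = 2Z(XW)² / [((αXW + X - YZ + Z)² + 4YZ²)^{3/2}] > 0 for all α > 0, provided X, Y, Z, W > 0. -/

import Mathlib

theorem stmt_19 (X Y Z W : ℝ) (hX : 0 < X) (hY : 0 < Y) (hZ : 0 < Z) (hW : 0 < W)
    (B : ℝ → ℝ)
    (hB : ∀ V, B V = (X * V + X + Y * Z + Z -
      Real.sqrt ((X * V + X - Y * Z + Z) ^ 2 + 4 * Y * Z ^ 2)) / (2 * Y * Z))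
    (F : ℝ → ℝ) (hF : ∀ α, F α = α * B W - B (α * W)) :
    ∀ α > (0 : ℝ),
      deriv (deriv F) α = 2 * Z * (X * W) ^ 2 /
        (((α * X * W + X - Y * Z + Z) ^ 2 + 4 * Y * Z ^ 2) ^ ((3 : ℝ) / 2)) ∧
      0 < deriv (deriv F) α := by
  set a := X * W with ha
  set c := X - Y * Z + Z with hc
  set d := 4 * Y * Z ^ 2 with hd
  have hapos : 0 < a := mul_pos hX hW
  have hdpos : 0 < d := by positivity
  have hgpos : ∀ t : ℝ, 0 < (a * t + c) ^ 2 + d := fun t => by positivity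
  have hFeq : F = fun t => t * B W - (a * t + (X + Y * Z + Z) -
      Real.sqrt ((a * t + c) ^ 2 + d)) / (2 * Y * Z) := by
    funext t
    rw [hF, hB W, hB (t * W)]
    have harg : X * (t * W) + X - Y * Z + Z = a * t + c := by rw [ha, hc]; ring
    rw [harg, ha]
    ring
  have hquad : ∀ t : ℝ, HasDerivAt (fun s => (a * s + c) ^ 2 + d) (2 * (a * t + c) * a) t := by
    intro t
    have h1 : HasDerivAt (fun s => a * s + c) a t := by
      simpa using ((hasDerivAt_id t).const_mul a).add_const c
    have := (h1.pow 2).add_const d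
    simpa [mul_comm, mul_assoc] using this
  have hsq : ∀ t : ℝ, HasDerivAt (fun s => Real.sqrt ((a * s + c) ^ 2 + d))
      (a * (a * t + c) / Real.sqrt ((a * t + c) ^ 2 + d)) t := by
    intro t
    have h := (hquad t).sqrt (ne_of_gt (hgpos t))
    have hs : Real.sqrt ((a * t + c) ^ 2 + d) ≠ 0 := by positivity
    convert h using 1
    field_simp
  have hF' : deriv F = fun t => B W - (a - a * (a * t + c) /
      Real.sqrt ((a * t + c) ^ 2 + d)) / (2 * Y * Z) := by
    funext t
    have h1 : HasDerivAt (fun s => s * B W) (B W) t := by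
      simpa using (hasDerivAt_id t).mul_const (B W)
    have hlin : HasDerivAt (fun s => a * s + (X + Y * Z + Z)) a t := by
      simpa using ((hasDerivAt_id t).const_mul a).add_const (X + Y * Z + Z)
    have h2 := (hlin.sub (hsq t)).div_const (2 * Y * Z)
    rw [hFeq]
    exact (h1.sub h2).deriv
  intro α hα
  set g := (a * α + c) ^ 2 + d with hg
  have hgpos' : 0 < g := hgpos α
  set s := Real.sqrt g with hsdef
  have hspos : 0 < s := Real.sqrt_pos.mpr hgpos'
  have hsne : s ≠ 0 := ne_of_gt hspos
  have hs2 : s ^ 2 = g := Real.sq_sqrt (le_of_lt hgpos')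
  have hnum : ∀ t : ℝ, HasDerivAt (fun u => a * (a * u + c)) (a * a) t := by
    intro t
    simpa using (((hasDerivAt_id t).const_mul a).add_const c).const_mul a
  have hdiv : HasDerivAt (fun t => a * (a * t + c) / Real.sqrt ((a * t + c) ^ 2 + d))
      ((a * a * s - a * (a * α + c) * (a * (a * α + c) / s)) / s ^ 2) α :=
    (hnum α).div (hsq α) hsne
  have hG : HasDerivAt (fun t => B W - (a - a * (a * t + c) /
      Real.sqrt ((a * t + c) ^ 2 + d)) / (2 * Y * Z))
      (0 - (0 - (a * a * s - a * (a * α + c) * (a * (a * α + c) / s)) / s ^ 2) / (2 * Y * Z)) α :=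
    (hasDerivAt_const α (B W)).sub (((hasDerivAt_const α a).sub hdiv).div_const (2 * Y * Z))
  have hd2 : deriv (deriv F) α =
      0 - (0 - (a * a * s - a * (a * α + c) * (a * (a * α + c) / s)) / s ^ 2) / (2 * Y * Z) := by
    rw [hF']
    exact hG.deriv
  have hrel : s ^ 2 = (a * α + c) ^ 2 + d := by rw [hs2, hg]
  have hkey1 : a * a * s - a * (a * α + c) * (a * (a * α + c) / s) = a ^ 2 * d / s := by
    rw [eq_div_iff hsne]
    have hq : a * (a * α + c) / s * s = a * (a * α + c) := div_mul_cancel₀ _ hsne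
    linear_combination a ^ 2 * hrel - a * (a * α + c) * hq
  have hYne : (Y : ℝ) ≠ 0 := ne_of_gt hY
  have hZne : (Z : ℝ) ≠ 0 := ne_of_gt hZ
  have key : deriv (deriv F) α = 2 * Z * (X * W) ^ 2 / (s * g) := by
    rw [hd2, hkey1, ← ha, ← hs2, hd]
    field_simp
    ring
  have hbase : (α * X * W + X - Y * Z + Z) ^ 2 + 4 * Y * Z ^ 2 = g := by
    rw [hg, hc, hd, ha]; ring
  have hrpow : g ^ ((3 : ℝ) / 2) = s * g := by
    rw [hsdef, Real.sqrt_eq_rpow]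
    have h32 : ((3 : ℝ) / 2) = 1 / 2 + 1 := by norm_num
    rw [h32, Real.rpow_add hgpos', Real.rpow_one]
  refine ⟨?_, ?_⟩
  · rw [key, hbase, hrpow]
  · rw [key]
    positivity
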